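/- arXiv:1705.06334 — 4 statements merged into one kernel-verified Lean document; each statement's English description precedes it below -/
import Mathlib

section
/- Let λ : (0,∞) → [0,∞) be slowly varying, 1 ≤ r < ∞ and ε > 0. Then there exist positive constants c₁, c₂ such that for all x ∈ (0,∞): c₁ x^ε λ(x) ≤ (∫₀ˣ t^{εr−1} λ(t)^r dt)^{1/r} ≤ c₂ x^ε λ(x). -/
open MeasureTheory Set Real


/-- `a` is slowly varying on `I`. -/
def SlowlyVaryingOn (a : ℝ → ℝ) (I : Set ℝ) : Prop :=
  ∀ ε : ℝ, 0 < ε → ∃ g₁ g₂ : ℝ → ℝ, MonotoneOn g₁ I ∧ AntitoneOn g₂ I ∧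
    ∃ c₁ c₂ : ℝ, 0 < c₁ ∧ 0 < c₂ ∧ ∀ t ∈ I,
      c₁ * g₁ t ≤ t ^ ε * a t ∧ t ^ ε * a t ≤ c₂ * g₁ t ∧
      c₁ * g₂ t ≤ t ^ (-ε) * a t ∧ t ^ (-ε) * a t ≤ c₂ * g₂ t

theorem stmt2 (l : ℝ → ℝ) (hl0 : ∀ t ∈ Set.Ioi (0:ℝ), 0 ≤ l t) (hlm : Measurable l)
    (hsv : SlowlyVaryingOn l (Set.Ioi 0)) (r ε : ℝ) (hr : 1 ≤ r) (hε : 0 < ε) :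
    ∃ c₁ c₂ : ℝ, 0 < c₁ ∧ 0 < c₂ ∧ ∀ x ∈ Set.Ioi (0:ℝ),
      c₁ * (x ^ ε * l x) ≤ (∫ t in Set.Ioo 0 x, t ^ (ε * r - 1) * l t ^ r) ^ r⁻¹ ∧
      (∫ t in Set.Ioo 0 x, t ^ (ε * r - 1) * l t ^ r) ^ r⁻¹ ≤ c₂ * (x ^ ε * l x) := by
  have hr0 : (0:ℝ) < r := lt_of_lt_of_le one_pos hr
  have hrne : r ≠ 0 := ne_of_gt hr0
  set δ : ℝ := ε / 2 with hδdef
  have hδ0 : 0 < δ := by positivity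
  obtain ⟨g₁, g₂, hg₁, hg₂, a, b, ha, hb, hbd⟩ := hsv δ hδ0
  -- pointwise comparison lemmas
  have hU : ∀ t x : ℝ, 0 < t → t ≤ x → t ^ δ * l t ≤ b / a * (x ^ δ * l x) := by
    intro t x ht htx
    have hx : 0 < x := lt_of_lt_of_le ht htx
    have h1 := (hbd t (Set.mem_Ioi.mpr ht)).2.1
    have h2 : g₁ t ≤ g₁ x := hg₁ (Set.mem_Ioi.mpr ht) (Set.mem_Ioi.mpr hx) htx
    have h3 := (hbd x (Set.mem_Ioi.mpr hx)).1
    calc t ^ δ * l t ≤ b * g₁ t := h1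
      _ ≤ b * g₁ x := mul_le_mul_of_nonneg_left h2 hb.le
      _ = b / a * (a * g₁ x) := by field_simp
      _ ≤ b / a * (x ^ δ * l x) := mul_le_mul_of_nonneg_left h3 (by positivity)
  have hL : ∀ t x : ℝ, 0 < t → t ≤ x → a / b * (x ^ (-δ) * l x) ≤ t ^ (-δ) * l t := by
    intro t x ht htx
    have hx : 0 < x := lt_of_lt_of_le ht htx
    have h1 := (hbd x (Set.mem_Ioi.mpr hx)).2.2.2
    have h2 : g₂ x ≤ g₂ t := hg₂ (Set.mem_Ioi.mpr ht) (Set.mem_Ioi.mpr hx) htx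
    have h3 := (hbd t (Set.mem_Ioi.mpr ht)).2.2.1
    calc a / b * (x ^ (-δ) * l x) ≤ a / b * (b * g₂ x) :=
          mul_le_mul_of_nonneg_left h1 (by positivity)
      _ = a * g₂ x := by field_simp
      _ ≤ a * g₂ t := mul_le_mul_of_nonneg_left h2 ha.le
      _ ≤ t ^ (-δ) * l t := h3
  -- constants
  set B : ℝ := (b / a) ^ r * (δ * r)⁻¹ with hBdef
  have htwo : (0:ℝ) < 1 - (2:ℝ) ^ (-(ε * r)) := by
    have : (2:ℝ) ^ (-(ε * r)) < 1 :=
      Real.rpow_lt_one_of_one_lt_of_neg one_lt_two (neg_lt_zero.mpr (by positivity))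
    linarith
  set A : ℝ := (a / b * 2 ^ (-δ)) ^ r * ((1 - (2:ℝ) ^ (-(ε * r))) / (ε * r)) with hAdef
  have hA0 : 0 < A := by
    apply mul_pos
    · exact Real.rpow_pos_of_pos (by positivity) r
    · exact div_pos htwo (by positivity)
  have hB0 : 0 < B := by
    apply mul_pos
    · exact Real.rpow_pos_of_pos (by positivity) r
    · positivity
  refine ⟨A ^ r⁻¹, B ^ r⁻¹, Real.rpow_pos_of_pos hA0 _, Real.rpow_pos_of_pos hB0 _, ?_⟩
  intro x hx
  rw [Set.mem_Ioi] at hx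
  set X : ℝ := x ^ ε * l x with hXdef
  have hlx : 0 ≤ l x := hl0 x (Set.mem_Ioi.mpr hx)
  have hX0 : 0 ≤ X := by positivity
  set F : ℝ → ℝ := fun t => t ^ (ε * r - 1) * l t ^ r with hFdef
  have hFm : Measurable F := by fun_prop
  have hFnn : ∀ t ∈ Set.Ioo (0:ℝ) x, 0 ≤ F t := by
    intro t ht
    have h := hl0 t (Set.mem_Ioi.mpr ht.1)
    show 0 ≤ t ^ (ε * r - 1) * l t ^ r
    exact mul_nonneg (Real.rpow_nonneg ht.1.le _) (Real.rpow_nonneg h _)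
  -- pointwise upper bound of integrand
  set M : ℝ := (b / a * (x ^ δ * l x)) ^ r with hMdef
  have hM0 : 0 ≤ M := Real.rpow_nonneg (by positivity) r
  have hptU : ∀ t ∈ Set.Ioo (0:ℝ) x, F t ≤ M * t ^ (δ * r - 1) := by
    intro t ht
    obtain ⟨ht0, htx⟩ := ht
    have hlt : 0 ≤ l t := hl0 t (Set.mem_Ioi.mpr ht0)
    have key : (t ^ δ * l t) ^ r ≤ M :=
      Real.rpow_le_rpow (by positivity) (hU t x ht0 htx.le) hr0.le
    have expand : (t ^ δ * l t) ^ r = t ^ (δ * r) * l t ^ r := by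
      rw [Real.mul_rpow (by positivity) hlt, ← Real.rpow_mul ht0.le]
    have hsplit : t ^ (ε * r - 1) = t ^ (δ * r - 1) * t ^ (δ * r) := by
      rw [← Real.rpow_add ht0, hδdef]; ring_nf
    calc F t = t ^ (δ * r - 1) * (t ^ (δ * r) * l t ^ r) := by
          rw [hFdef]; simp only []; rw [hsplit]; ring
      _ = t ^ (δ * r - 1) * (t ^ δ * l t) ^ r := by rw [expand]
      _ ≤ t ^ (δ * r - 1) * M := mul_le_mul_of_nonneg_left key (by positivity)
      _ = M * t ^ (δ * r - 1) := mul_comm _ _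
  -- the dominating function is integrable on Ioo 0 x
  have hgint : IntegrableOn (fun t : ℝ => M * t ^ (δ * r - 1)) (Set.Ioo 0 x) := by
    have h1 : IntervalIntegrable (fun t : ℝ => t ^ (δ * r - 1)) volume 0 x :=
      intervalIntegral.intervalIntegrable_rpow' (by nlinarith)
    have h2 : IntegrableOn (fun t : ℝ => t ^ (δ * r - 1)) (Set.Ioc 0 x) := h1.1
    exact ((h2.mono_set Set.Ioo_subset_Ioc_self).const_mul M)
  -- F is integrable on Ioo 0 x
  have hFint : IntegrableOn F (Set.Ioo 0 x) := by
    apply Integrable.mono' hgint (hFm.aestronglyMeasurable)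
    rw [MeasureTheory.ae_restrict_iff' measurableSet_Ioo]
    filter_upwards with t ht
    rw [Real.norm_eq_abs, abs_of_nonneg (hFnn t ht)]
    exact hptU t ht
  -- value of the dominating integral
  have hval : ∫ t in Set.Ioo (0:ℝ) x, M * t ^ (δ * r - 1) = M * (x ^ (δ * r) / (δ * r)) := by
    rw [MeasureTheory.integral_const_mul]
    congr 1
    rw [← MeasureTheory.integral_Ioc_eq_integral_Ioo,
      ← intervalIntegral.integral_of_le hx.le,
      integral_rpow (Or.inl (by nlinarith))]
    have : δ * r - 1 + 1 = δ * r := by ring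
    rw [this, Real.zero_rpow (by positivity), sub_zero]
  -- upper bound for the integral
  have hIub : ∫ t in Set.Ioo (0:ℝ) x, F t ≤ B * X ^ r := by
    have h1 := MeasureTheory.setIntegral_mono_on hFint hgint measurableSet_Ioo hptU
    rw [hval] at h1
    refine h1.trans (le_of_eq ?_)
    rw [hMdef, hBdef, hXdef]
    rw [Real.mul_rpow (by positivity) (by positivity),
      Real.mul_rpow (by positivity) hlx, Real.mul_rpow (by positivity) hlx,
      ← Real.rpow_mul hx.le, ← Real.rpow_mul hx.le]
    have : x ^ (δ * r) * (l x ^ r) * (x ^ (δ * r) / (δ * r)) =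
        (x ^ (δ * r) * x ^ (δ * r)) * l x ^ r * (δ * r)⁻¹ := by ring
    rw [mul_assoc, this, ← Real.rpow_add hx]
    have h2 : δ * r + δ * r = ε * r := by rw [hδdef]; ring
    rw [h2]; ring
  -- lower bound for the integral
  have hIlb : A * X ^ r ≤ ∫ t in Set.Ioo (0:ℝ) x, F t := by
    set m : ℝ := (a / b * 2 ^ (-δ) * l x) ^ r with hmdef
    have hsub : Set.Ioo (x / 2) x ⊆ Set.Ioo 0 x :=
      Set.Ioo_subset_Ioo (by positivity) le_rfl
    -- pointwise lower bound on Ioo (x/2) x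
    have hptL : ∀ t ∈ Set.Ioo (x / 2) x, m * t ^ (ε * r - 1) ≤ F t := by
      intro t ht
      obtain ⟨ht1, ht2⟩ := ht
      have ht0 : 0 < t := lt_trans (by positivity) ht1
      have hlt : 0 ≤ l t := hl0 t (Set.mem_Ioi.mpr ht0)
      have key : a / b * 2 ^ (-δ) * l x ≤ l t := by
        have h1 := hL t x ht0 ht2.le
        have h2 : l t = t ^ δ * (t ^ (-δ) * l t) := by
          rw [← mul_assoc, ← Real.rpow_add ht0]; simp
        have h3 : t ^ δ * (a / b * (x ^ (-δ) * l x)) ≤ t ^ δ * (t ^ (-δ) * l t) :=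
          mul_le_mul_of_nonneg_left h1 (by positivity)
        have h4 : (x / 2 : ℝ) ^ δ ≤ t ^ δ :=
          Real.rpow_le_rpow (by positivity) ht1.le hδ0.le
        have h5 : (x / 2 : ℝ) ^ δ * (a / b * (x ^ (-δ) * l x)) ≤
            t ^ δ * (a / b * (x ^ (-δ) * l x)) :=
          mul_le_mul_of_nonneg_right h4 (by positivity)
        have h6 : (x / 2 : ℝ) ^ δ * (a / b * (x ^ (-δ) * l x)) =
            a / b * 2 ^ (-δ) * l x := by
          rw [Real.div_rpow hx.le (by norm_num), Real.rpow_neg hx.le,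
            Real.rpow_neg (by norm_num : (0:ℝ) ≤ 2)]
          have hxδ : (0:ℝ) < x ^ δ := Real.rpow_pos_of_pos hx δ
          field_simp
        rw [h2]
        calc a / b * 2 ^ (-δ) * l x = (x / 2 : ℝ) ^ δ * (a / b * (x ^ (-δ) * l x)) := h6.symm
          _ ≤ t ^ δ * (a / b * (x ^ (-δ) * l x)) := h5
          _ ≤ t ^ δ * (t ^ (-δ) * l t) := h3
      have key2 : m ≤ l t ^ r :=
        Real.rpow_le_rpow (by positivity) key hr0.le
      calc m * t ^ (ε * r - 1) ≤ l t ^ r * t ^ (ε * r - 1) :=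
            mul_le_mul_of_nonneg_right key2 (by positivity)
        _ = F t := by rw [hFdef]; ring
    -- integrability on the smaller set
    have hFint2 : IntegrableOn F (Set.Ioo (x / 2) x) := hFint.mono_set hsub
    have hgint2 : IntegrableOn (fun t : ℝ => m * t ^ (ε * r - 1)) (Set.Ioo (x / 2) x) := by
      have h1 : IntervalIntegrable (fun t : ℝ => t ^ (ε * r - 1)) volume (x / 2) x :=
        intervalIntegral.intervalIntegrable_rpow' (by nlinarith)
      exact ((h1.1.mono_set Set.Ioo_subset_Ioc_self).const_mul m)
    have h1 := MeasureTheory.setIntegral_mono_on hgint2 hFint2 measurableSet_Ioo hptL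
    have h2 : ∫ t in Set.Ioo (x / 2) x, F t ≤ ∫ t in Set.Ioo (0:ℝ) x, F t := by
      apply MeasureTheory.setIntegral_mono_set hFint
      · rw [Filter.EventuallyLE, MeasureTheory.ae_restrict_iff' measurableSet_Ioo]
        filter_upwards with t ht
        simpa using hFnn t ht
      · exact HasSubset.Subset.eventuallyLE hsub
    have hval2 : ∫ t in Set.Ioo (x / 2) x, m * t ^ (ε * r - 1) =
        m * ((x ^ (ε * r) - (x / 2) ^ (ε * r)) / (ε * r)) := by
      rw [MeasureTheory.integral_const_mul]
      congr 1
      rw [← MeasureTheory.integral_Ioc_eq_integral_Ioo,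
        ← intervalIntegral.integral_of_le (by linarith : x / 2 ≤ x),
        integral_rpow (Or.inl (by nlinarith))]
      congr 2 <;> ring
    have heq : m * ((x ^ (ε * r) - (x / 2) ^ (ε * r)) / (ε * r)) = A * X ^ r := by
      rw [hmdef, hAdef, hXdef]
      rw [Real.mul_rpow (by positivity) hlx,
        Real.mul_rpow (by positivity) hlx, ← Real.rpow_mul hx.le]
      have hhalf : (x / 2 : ℝ) ^ (ε * r) = x ^ (ε * r) * 2 ^ (-(ε * r)) := by
        rw [Real.div_rpow hx.le (by norm_num), Real.rpow_neg (by norm_num : (0:ℝ) ≤ 2)]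
        field_simp
      rw [hhalf]
      ring
    calc A * X ^ r = m * ((x ^ (ε * r) - (x / 2) ^ (ε * r)) / (ε * r)) := heq.symm
      _ = ∫ t in Set.Ioo (x / 2) x, m * t ^ (ε * r - 1) := hval2.symm
      _ ≤ ∫ t in Set.Ioo (x / 2) x, F t := h1
      _ ≤ ∫ t in Set.Ioo (0:ℝ) x, F t := h2
  -- conclude
  have hInn : 0 ≤ ∫ t in Set.Ioo (0:ℝ) x, F t := le_trans (by positivity) hIlb
  have hXr : (X ^ r) ^ r⁻¹ = X := by
    rw [← Real.rpow_mul hX0, mul_inv_cancel₀ hrne, Real.rpow_one]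
  constructor
  · have h := Real.rpow_le_rpow (by positivity) hIlb (by positivity : (0:ℝ) ≤ r⁻¹)
    rwa [Real.mul_rpow hA0.le (Real.rpow_nonneg hX0 r), hXr] at h
  · have h := Real.rpow_le_rpow hInn hIub (by positivity : (0:ℝ) ≤ r⁻¹)
    rwa [Real.mul_rpow hB0.le (Real.rpow_nonneg hX0 r), hXr] at h
end

section
/- Let λ : (0,∞) → [0,∞) be slowly varying, 1 ≤ r < ∞ and ε > 0. Then there exist positive constants c₁, c₂ such that for all x ∈ (0,∞): c₁ x^{−ε} λ(x) ≤ (∫ₓ^∞ t^{−εr−1} λ(t)^r dt)^{1/r} ≤ c₂ x^{−ε} λ(x). -/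
open MeasureTheory Set Real


theorem stmt3 (l : ℝ → ℝ) (hl0 : ∀ t ∈ Set.Ioi (0:ℝ), 0 ≤ l t) (hlm : Measurable l)
    (hsv : SlowlyVaryingOn l (Set.Ioi 0)) (r ε : ℝ) (hr : 1 ≤ r) (hε : 0 < ε) :
    ∃ c₁ c₂ : ℝ, 0 < c₁ ∧ 0 < c₂ ∧ ∀ x ∈ Set.Ioi (0:ℝ),
      c₁ * (x ^ (-ε) * l x) ≤ (∫ t in Set.Ioi x, t ^ (-(ε * r) - 1) * l t ^ r) ^ r⁻¹ ∧
      (∫ t in Set.Ioi x, t ^ (-(ε * r) - 1) * l t ^ r) ^ r⁻¹ ≤ c₂ * (x ^ (-ε) * l x) := by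
  obtain ⟨g₁, g₂, hg₁, hg₂, c₁, c₂, hc₁, hc₂, hg⟩ := hsv (ε/2) (by positivity)
  have hr0 : (0:ℝ) < r := lt_of_lt_of_le one_pos hr
  have hr0' : r ≠ 0 := hr0.ne'
  refine ⟨c₁ / c₂ * 2 ^ (-(ε/2)) * 2 ^ ((-(ε*r) - 1) * r⁻¹),
    c₂ / c₁ * ((ε/2*r)⁻¹) ^ r⁻¹, by positivity, by positivity, ?_⟩
  intro x hx
  have hx0 : (0:ℝ) < x := hx
  -- nonnegativity of the integrand on Ioi x
  have hf_nonneg : ∀ t ∈ Set.Ioi x, 0 ≤ t ^ (-(ε * r) - 1) * l t ^ r := by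
    intro t ht
    have ht0 : (0:ℝ) < t := lt_trans hx0 ht
    have := hl0 t (by exact lt_trans hx0 ht)
    positivity
  have hfm : Measurable fun t : ℝ => t ^ (-(ε * r) - 1) * l t ^ r := by
    fun_prop
  -- pointwise upper bound
  have hg₂x : 0 ≤ g₂ x := by
    have h := (hg x hx).2.2.2
    have h2 : 0 ≤ x ^ (-(ε/2)) * l x := by
      have := hl0 x hx; positivity
    nlinarith
  have hfub : ∀ t ∈ Set.Ioi x, t ^ (-(ε * r) - 1) * l t ^ r
      ≤ (c₂ * g₂ x) ^ r * t ^ (-(ε/2*r) - 1) := by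
    intro t ht
    have ht0 : (0:ℝ) < t := lt_trans hx0 ht
    have hlt : l t ≤ c₂ * g₂ x * t ^ (ε/2) := by
      have h1 : t ^ (-(ε/2)) * l t ≤ c₂ * g₂ t := (hg t ht0).2.2.2
      have h2 : g₂ t ≤ g₂ x := hg₂ hx ht0 (le_of_lt ht)
      have h3 : t ^ (-(ε/2)) * l t ≤ c₂ * g₂ x := by nlinarith
      have key : t ^ (ε/2) * (t ^ (-(ε/2)) * l t) = l t := by
        rw [← mul_assoc, ← Real.rpow_add ht0]
        norm_num
      calc l t = t ^ (ε/2) * (t ^ (-(ε/2)) * l t) := key.symm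
        _ ≤ t ^ (ε/2) * (c₂ * g₂ x) := by
            have : (0:ℝ) ≤ t ^ (ε/2) := by positivity
            nlinarith
        _ = c₂ * g₂ x * t ^ (ε/2) := by ring
    have hlt' : l t ^ r ≤ (c₂ * g₂ x) ^ r * t ^ (ε/2*r) := by
      have h4 : l t ^ r ≤ (c₂ * g₂ x * t ^ (ε/2)) ^ r :=
        Real.rpow_le_rpow (hl0 t (lt_trans hx0 ht)) hlt hr0.le
      rwa [Real.mul_rpow (by positivity) (by positivity),
        ← Real.rpow_mul ht0.le] at h4
    calc t ^ (-(ε * r) - 1) * l t ^ r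
        ≤ t ^ (-(ε * r) - 1) * ((c₂ * g₂ x) ^ r * t ^ (ε/2*r)) := by
          have : (0:ℝ) ≤ t ^ (-(ε * r) - 1) := by positivity
          nlinarith
      _ = (c₂ * g₂ x) ^ r * (t ^ (-(ε * r) - 1) * t ^ (ε/2*r)) := by ring
      _ = (c₂ * g₂ x) ^ r * t ^ (-(ε/2*r) - 1) := by
          rw [← Real.rpow_add ht0]; ring_nf
  have hexp : -(ε/2*r) - 1 < -1 := by nlinarith
  have hint_pow : IntegrableOn (fun t : ℝ => t ^ (-(ε/2*r) - 1)) (Set.Ioi x) :=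
    integrableOn_Ioi_rpow_of_lt hexp hx0
  have hint_f : IntegrableOn (fun t : ℝ => t ^ (-(ε * r) - 1) * l t ^ r) (Set.Ioi x) := by
    refine Integrable.mono' (hint_pow.const_mul ((c₂ * g₂ x) ^ r))
      hfm.aestronglyMeasurable ?_
    filter_upwards [self_mem_ae_restrict measurableSet_Ioi] with t ht
    rw [Real.norm_eq_abs, abs_of_nonneg (hf_nonneg t ht)]
    exact hfub t ht
  have hInn : 0 ≤ ∫ t in Set.Ioi x, t ^ (-(ε * r) - 1) * l t ^ r :=
    setIntegral_nonneg measurableSet_Ioi hf_nonneg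
  -- upper bound for the integral
  have hIub : (∫ t in Set.Ioi x, t ^ (-(ε * r) - 1) * l t ^ r)
      ≤ (c₂ * g₂ x) ^ r * (x ^ (-(ε/2*r)) * (ε/2*r)⁻¹) := by
    have h := setIntegral_mono_on hint_f (hint_pow.const_mul ((c₂ * g₂ x) ^ r))
      measurableSet_Ioi hfub
    rw [integral_const_mul, integral_Ioi_rpow_of_lt hexp hx0] at h
    have heq : -x ^ (-(ε/2*r) - 1 + 1) / (-(ε/2*r) - 1 + 1)
        = x ^ (-(ε/2*r)) * (ε/2*r)⁻¹ := by
      have : -(ε/2*r) - 1 + 1 = -(ε/2*r) := by ring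
      rw [this]
      field_simp
    rwa [heq] at h
  -- lower bound for the integral
  have hB0 : 0 ≤ c₁ / c₂ * 2 ^ (-(ε/2)) * l x := by
    have := hl0 x hx; positivity
  have hll : ∀ t ∈ Set.Ioc x (2*x), c₁ / c₂ * 2 ^ (-(ε/2)) * l x ≤ l t := by
    intro t ht
    have ht0 : (0:ℝ) < t := lt_trans hx0 ht.1
    have h1 : c₁ * g₁ t ≤ t ^ (ε/2) * l t := (hg t ht0).1
    have h2 : x ^ (ε/2) * l x ≤ c₂ * g₁ x := (hg x hx).2.1
    have h3 : g₁ x ≤ g₁ t := hg₁ hx ht0 ht.1.le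
    have h4 : c₁ / c₂ * (x ^ (ε/2) * l x) ≤ t ^ (ε/2) * l t := by
      have h5 : c₁ / c₂ * (x ^ (ε/2) * l x) ≤ c₁ / c₂ * (c₂ * g₁ x) := by
        have : (0:ℝ) < c₁ / c₂ := by positivity
        nlinarith
      have h6 : c₁ / c₂ * (c₂ * g₁ x) = c₁ * g₁ x := by field_simp
      nlinarith
    have h7 : (2*x) ^ (-(ε/2)) ≤ t ^ (-(ε/2)) :=
      Real.rpow_le_rpow_of_nonpos ht0 ht.2 (by linarith)
    have key : t ^ (-(ε/2)) * (t ^ (ε/2) * l t) = l t := by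
      rw [← mul_assoc, ← Real.rpow_add ht0]; norm_num
    have h8 : (2*x) ^ (-(ε/2)) * (c₁ / c₂ * (x ^ (ε/2) * l x)) ≤ l t := by
      rw [← key]
      have hp : (0:ℝ) ≤ (2*x) ^ (-(ε/2)) := by positivity
      have hq : (0:ℝ) ≤ t ^ (-(ε/2)) := by positivity
      have hA : 0 ≤ c₁ / c₂ * (x ^ (ε/2) * l x) := by
        have := hl0 x hx; positivity
      exact mul_le_mul h7 h4 (by nlinarith) hq
    have h9 : (2*x) ^ (-(ε/2)) * (c₁ / c₂ * (x ^ (ε/2) * l x))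
        = c₁ / c₂ * 2 ^ (-(ε/2)) * l x := by
      rw [Real.mul_rpow (by norm_num) hx0.le]
      have : x ^ (-(ε/2)) * x ^ (ε/2) = 1 := by
        rw [← Real.rpow_add hx0]; norm_num
      nlinarith [this]
    linarith [h8, h9.symm.le]
  set B := c₁ / c₂ * 2 ^ (-(ε/2)) * l x with hBdef
  have hfl : ∀ t ∈ Set.Ioc x (2*x),
      (2*x) ^ (-(ε * r) - 1) * B ^ r ≤ t ^ (-(ε * r) - 1) * l t ^ r := by
    intro t ht
    have ht0 : (0:ℝ) < t := lt_trans hx0 ht.1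
    have h1 : (2*x) ^ (-(ε * r) - 1) ≤ t ^ (-(ε * r) - 1) :=
      Real.rpow_le_rpow_of_nonpos ht0 ht.2 (by nlinarith)
    have h2 : B ^ r ≤ l t ^ r := Real.rpow_le_rpow hB0 (hll t ht) hr0.le
    have hp : (0:ℝ) ≤ (2*x) ^ (-(ε * r) - 1) := by positivity
    have hq : (0:ℝ) ≤ t ^ (-(ε * r) - 1) := by positivity
    have hb : (0:ℝ) ≤ B ^ r := Real.rpow_nonneg hB0 r
    exact mul_le_mul h1 h2 hb hq
  have hIlb : (2*x) ^ (-(ε * r) - 1) * B ^ r * x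
      ≤ ∫ t in Set.Ioi x, t ^ (-(ε * r) - 1) * l t ^ r := by
    have hsub : Set.Ioc x (2*x) ⊆ Set.Ioi x := Set.Ioc_subset_Ioi_self
    have hintsub : IntegrableOn (fun t : ℝ => t ^ (-(ε * r) - 1) * l t ^ r)
        (Set.Ioc x (2*x)) := hint_f.mono_set hsub
    calc (2*x) ^ (-(ε * r) - 1) * B ^ r * x
        = ∫ _ in Set.Ioc x (2*x), (2*x) ^ (-(ε * r) - 1) * B ^ r := by
          rw [setIntegral_const, Real.volume_real_Ioc_of_le (by linarith), smul_eq_mul]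
          ring_nf
      _ ≤ ∫ t in Set.Ioc x (2*x), t ^ (-(ε * r) - 1) * l t ^ r :=
          setIntegral_mono_on (integrableOn_const (by
            rw [Real.volume_Ioc]; exact ENNReal.ofReal_ne_top)) hintsub
            measurableSet_Ioc hfl
      _ ≤ ∫ t in Set.Ioi x, t ^ (-(ε * r) - 1) * l t ^ r := by
          refine setIntegral_mono_set hint_f ?_ (HasSubset.Subset.eventuallyLE hsub)
          filter_upwards [self_mem_ae_restrict measurableSet_Ioi] with t ht
          exact hf_nonneg t ht
  -- take r-th roots
  constructor
  · -- lower bound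
    have hstep : ((2*x) ^ (-(ε * r) - 1) * B ^ r * x) ^ r⁻¹
        ≤ (∫ t in Set.Ioi x, t ^ (-(ε * r) - 1) * l t ^ r) ^ r⁻¹ := by
      refine Real.rpow_le_rpow ?_ hIlb (by positivity)
      exact mul_nonneg (mul_nonneg (by positivity) (Real.rpow_nonneg hB0 r)) hx0.le
    have hcomp : ((2*x) ^ (-(ε * r) - 1) * B ^ r * x) ^ r⁻¹
        = c₁ / c₂ * 2 ^ (-(ε/2)) * 2 ^ ((-(ε*r) - 1) * r⁻¹) * (x ^ (-ε) * l x) := by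
      have e1 : (2*x) ^ (-(ε * r) - 1) = 2 ^ (-(ε * r) - 1) * x ^ (-(ε * r) - 1) :=
        Real.mul_rpow (by norm_num) hx0.le
      have e2 : x ^ (-(ε * r) - 1) * x = x ^ (-(ε * r)) := by
        nth_rewrite 2 [← Real.rpow_one x]
        rw [← Real.rpow_add hx0]; ring_nf
      have e3 : (2*x) ^ (-(ε * r) - 1) * B ^ r * x
          = B ^ r * (2 ^ (-(ε * r) - 1) * x ^ (-(ε * r))) := by
        rw [e1, ← e2]; ring
      have e4 : -(ε * r) * r⁻¹ = -ε := by field_simp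
      have e5 : (-(ε * r) - 1) * r⁻¹ = (-(ε*r) - 1) * r⁻¹ := rfl
      have p1 : (0:ℝ) ≤ 2 ^ (-(ε*r) - 1) := Real.rpow_nonneg (by norm_num) _
      have p2 : (0:ℝ) ≤ x ^ (-(ε*r)) := Real.rpow_nonneg hx0.le _
      rw [e3, Real.mul_rpow (Real.rpow_nonneg hB0 r) (mul_nonneg p1 p2),
        Real.mul_rpow p1 p2,
        Real.rpow_rpow_inv hB0 hr0',
        ← Real.rpow_mul (by norm_num : (0:ℝ) ≤ 2),
        ← Real.rpow_mul hx0.le, e4, hBdef]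
      ring
    rw [← hcomp]; exact hstep
  · -- upper bound
    have hstep : (∫ t in Set.Ioi x, t ^ (-(ε * r) - 1) * l t ^ r) ^ r⁻¹
        ≤ ((c₂ * g₂ x) ^ r * (x ^ (-(ε/2*r)) * (ε/2*r)⁻¹)) ^ r⁻¹ :=
      Real.rpow_le_rpow hInn hIub (by positivity)
    have hcomp : ((c₂ * g₂ x) ^ r * (x ^ (-(ε/2*r)) * (ε/2*r)⁻¹)) ^ r⁻¹
        = c₂ * g₂ x * (x ^ (-(ε/2)) * ((ε/2*r)⁻¹) ^ r⁻¹) := by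
      have e4 : -(ε/2*r) * r⁻¹ = -(ε/2) := by field_simp
      have pg : (0:ℝ) ≤ c₂ * g₂ x := mul_nonneg hc₂.le hg₂x
      have p1 : (0:ℝ) ≤ x ^ (-(ε/2*r)) := Real.rpow_nonneg hx0.le _
      have p2 : (0:ℝ) ≤ (ε/2*r)⁻¹ := by positivity
      rw [Real.mul_rpow (Real.rpow_nonneg pg r) (mul_nonneg p1 p2),
        Real.mul_rpow p1 p2, Real.rpow_rpow_inv pg hr0',
        ← Real.rpow_mul hx0.le, e4]
    have hfin : c₂ * g₂ x * (x ^ (-(ε/2)) * ((ε/2*r)⁻¹) ^ r⁻¹)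
        ≤ c₂ / c₁ * ((ε/2*r)⁻¹) ^ r⁻¹ * (x ^ (-ε) * l x) := by
      have h1 : c₁ * g₂ x ≤ x ^ (-(ε/2)) * l x := (hg x hx).2.2.1
      have h2 : c₂ * g₂ x ≤ c₂ / c₁ * (x ^ (-(ε/2)) * l x) := by
        have h1' := mul_le_mul_of_nonneg_left h1 (le_of_lt (div_pos hc₂ hc₁))
        calc c₂ * g₂ x = c₂ / c₁ * (c₁ * g₂ x) := by field_simp
          _ ≤ c₂ / c₁ * (x ^ (-(ε/2)) * l x) := h1'
      have hxx : x ^ (-(ε/2)) * x ^ (-(ε/2)) = x ^ (-ε) := by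
        rw [← Real.rpow_add hx0]; ring_nf
      calc c₂ * g₂ x * (x ^ (-(ε/2)) * ((ε/2*r)⁻¹) ^ r⁻¹)
          ≤ c₂ / c₁ * (x ^ (-(ε/2)) * l x) * (x ^ (-(ε/2)) * ((ε/2*r)⁻¹) ^ r⁻¹) :=
            mul_le_mul_of_nonneg_right h2 (by positivity)
        _ = c₂ / c₁ * ((ε/2*r)⁻¹) ^ r⁻¹ * (x ^ (-ε) * l x) := by
            rw [← hxx]; ring
    calc (∫ t in Set.Ioi x, t ^ (-(ε * r) - 1) * l t ^ r) ^ r⁻¹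
        ≤ ((c₂ * g₂ x) ^ r * (x ^ (-(ε/2*r)) * (ε/2*r)⁻¹)) ^ r⁻¹ := hstep
      _ = c₂ * g₂ x * (x ^ (-(ε/2)) * ((ε/2*r)⁻¹) ^ r⁻¹) := hcomp
      _ ≤ c₂ / c₁ * ((ε/2*r)⁻¹) ^ r⁻¹ * (x ^ (-ε) * l x) := hfin
end

section
/- Let λ : (0,∞) → [0,∞) be slowly varying and 1 ≤ r < ∞. Then there exists c > 0 such that for all x ∈ (0,∞): (∫₀ˣ t^{−1} λ(t)^r dt)^{1/r} ≥ c·λ(x) and (∫ₓ^∞ t^{−1} λ(t)^r dt)^{1/r} ≥ c·λ(x) (where these integrals may be infinite). -/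
open MeasureTheory Set Real


theorem stmt4 (l : ℝ → ℝ) (hl0 : ∀ t ∈ Set.Ioi (0:ℝ), 0 ≤ l t) (hlm : Measurable l)
    (hsv : SlowlyVaryingOn l (Set.Ioi 0)) (r : ℝ) (hr : 1 ≤ r) :
    ∃ c : ℝ, 0 < c ∧ ∀ x ∈ Set.Ioi (0:ℝ),
      ENNReal.ofReal (c * l x) ≤
        (∫⁻ t in Set.Ioo 0 x, ENNReal.ofReal (t⁻¹ * l t ^ r)) ^ r⁻¹ ∧
      ENNReal.ofReal (c * l x) ≤
        (∫⁻ t in Set.Ioi x, ENNReal.ofReal (t⁻¹ * l t ^ r)) ^ r⁻¹ := by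
  obtain ⟨g₁, g₂, hg₁, hg₂, c₁, c₂, hc₁, hc₂, hbd⟩ := hsv 1 one_pos
  have hrpos : (0:ℝ) < r := lt_of_lt_of_le one_pos hr
  set B : ℝ := c₁ / (2 * c₂) with hBdef
  have hBpos : 0 < B := div_pos hc₁ (by linarith)
  refine ⟨B / 2, by positivity, fun x hx => ?_⟩
  have hx0 : (0:ℝ) < x := hx
  have hlx : 0 ≤ l x := hl0 x hx
  -- measurability of the integrand
  -- pointwise lower bound on (x/2, x)
  have key1 : ∀ t ∈ Ioo (x/2) x, B * l x ≤ l t := by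
    intro t ht
    have ht0 : 0 < t := lt_trans (by linarith) ht.1
    have h1 := (hbd t ht0).2.2.1
    have h2 := (hbd x hx).2.2.2
    rw [Real.rpow_neg_one] at h1 h2
    have hg : g₂ x ≤ g₂ t := hg₂ ht0 hx (le_of_lt ht.2)
    -- t⁻¹ * l t ≥ c₁ * g₂ t ≥ c₁ * g₂ x ≥ (c₁/c₂) * x⁻¹ * l x
    have h3 : c₁ / c₂ * (x⁻¹ * l x) ≤ t⁻¹ * l t := by
      have : c₁ * g₂ x ≤ c₁ * g₂ t := by nlinarith
      have h4 : c₁ / c₂ * (x⁻¹ * l x) ≤ c₁ * g₂ x := by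
        rw [div_mul_eq_mul_div, div_le_iff₀ hc₂]
        nlinarith
      linarith
    have hxinv : 0 < x⁻¹ := inv_pos.mpr hx0
    have htx : x / 2 ≤ t := le_of_lt ht.1
    have hlt : c₁ / c₂ * (x⁻¹ * l x) * t ≤ l t := by
      have h := mul_le_mul_of_nonneg_right h3 (le_of_lt ht0)
      have he : t⁻¹ * l t * t = l t := by field_simp
      linarith
    have hnn : 0 ≤ c₁ / c₂ * (x⁻¹ * l x) := by positivity
    calc B * l x = c₁ / c₂ * (x⁻¹ * l x) * (x / 2) := by
          rw [hBdef]; field_simp <;> ring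
      _ ≤ c₁ / c₂ * (x⁻¹ * l x) * t := by nlinarith
      _ ≤ l t := hlt
  -- pointwise lower bound on (x, 2x)
  have key2 : ∀ t ∈ Ioo x (2*x), B * l x ≤ l t := by
    intro t ht
    have ht0 : 0 < t := lt_trans hx0 ht.1
    have h1 := (hbd t ht0).1
    have h2 := (hbd x hx).2.1
    rw [Real.rpow_one] at h1 h2
    have hg : g₁ x ≤ g₁ t := hg₁ hx ht0 (le_of_lt ht.1)
    have h3 : c₁ / c₂ * (x * l x) ≤ t * l t := by
      have : c₁ * g₁ x ≤ c₁ * g₁ t := by nlinarith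
      have h4 : c₁ / c₂ * (x * l x) ≤ c₁ * g₁ x := by
        rw [div_mul_eq_mul_div, div_le_iff₀ hc₂]
        nlinarith
      linarith
    have : B * l x * t ≤ t * l t := by
      have hxl : 0 ≤ x * l x := by positivity
      have : B * l x * t ≤ c₁ / c₂ * (x * l x) := by
        rw [hBdef]
        have ht2x : t ≤ 2 * x := le_of_lt ht.2
        have : c₁ / (2 * c₂) * l x * t ≤ c₁ / (2 * c₂) * l x * (2 * x) := by
          have : 0 ≤ c₁ / (2 * c₂) * l x := by positivity
          nlinarith
        calc c₁ / (2 * c₂) * l x * t ≤ c₁ / (2 * c₂) * l x * (2 * x) := this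
          _ = c₁ / c₂ * (x * l x) := by field_simp
      linarith
    nlinarith
  -- generic integral lower bound
  have main : ∀ (s : Set ℝ) (a v : ℝ), MeasurableSet s → volume s = ENNReal.ofReal v →
      (0 < a) → (0 ≤ v) →
      (∀ t ∈ s, ENNReal.ofReal (a * (B * l x) ^ r) ≤ ENNReal.ofReal (t⁻¹ * l t ^ r)) →
      a * v = 2⁻¹ →
      ENNReal.ofReal ((B/2) * l x) ≤ (∫⁻ t in s, ENNReal.ofReal (t⁻¹ * l t ^ r)) ^ r⁻¹ := by
    intro s a v hms hvol ha hv hpt hav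
    have hstep : ENNReal.ofReal (a * (B * l x) ^ r) * volume s ≤
        ∫⁻ t in s, ENNReal.ofReal (t⁻¹ * l t ^ r) := by
      rw [← setLIntegral_const s (ENNReal.ofReal (a * (B * l x) ^ r))]
      exact setLIntegral_mono' hms hpt
    have hBl : (0:ℝ) ≤ B * l x := by positivity
    have hval : ENNReal.ofReal (a * (B * l x) ^ r) * volume s
        = ENNReal.ofReal (2⁻¹ * (B * l x) ^ r) := by
      rw [hvol, ← ENNReal.ofReal_mul (by positivity)]
      congr 1
      nlinarith [Real.rpow_nonneg hBl r]
    have h5 : ENNReal.ofReal (2⁻¹ * (B * l x) ^ r) ≤ ∫⁻ t in s, ENNReal.ofReal (t⁻¹ * l t ^ r) := by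
      rw [← hval]; exact hstep
    have h6 := ENNReal.rpow_le_rpow h5 (le_of_lt (inv_pos.mpr hrpos))
    refine le_trans ?_ h6
    rw [ENNReal.ofReal_rpow_of_nonneg (by positivity) (le_of_lt (inv_pos.mpr hrpos))]
    apply ENNReal.ofReal_le_ofReal
    rw [Real.mul_rpow (by norm_num) (Real.rpow_nonneg hBl r),
      Real.rpow_rpow_inv hBl (ne_of_gt hrpos)]
    have h7 : (2:ℝ)⁻¹ ≤ (2:ℝ)⁻¹ ^ r⁻¹ := by
      have := Real.rpow_le_rpow_of_exponent_ge (x := (2:ℝ)⁻¹) (by norm_num) (by norm_num)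
        (show r⁻¹ ≤ 1 by rw [inv_le_one_iff₀]; right; exact hr)
      simpa using this
    nlinarith [Real.rpow_nonneg (show (0:ℝ) ≤ 2⁻¹ by norm_num) r⁻¹]
  constructor
  · -- first integral over Ioo 0 x, restrict to Ioo (x/2) x
    have hsub : Ioo (x/2) x ⊆ Ioo 0 x := Ioo_subset_Ioo_left (by linarith)
    refine le_trans (main (Ioo (x/2) x) x⁻¹ (x/2) measurableSet_Ioo ?_ (inv_pos.mpr hx0)
      (by linarith) ?_ (by field_simp)) ?_
    · rw [Real.volume_Ioo]; congr 1; ring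
    · intro t ht
      apply ENNReal.ofReal_le_ofReal
      have ht0 : 0 < t := lt_trans (by linarith) ht.1
      have h1 : x⁻¹ ≤ t⁻¹ := by
        apply inv_anti₀ ht0 (le_of_lt ht.2)
      have h2 : (B * l x) ^ r ≤ l t ^ r :=
        Real.rpow_le_rpow (by positivity) (key1 t ht) (le_of_lt hrpos)
      have := Real.rpow_nonneg (show (0:ℝ) ≤ B * l x by positivity) r
      nlinarith [inv_pos.mpr hx0, inv_pos.mpr ht0]
    · exact ENNReal.rpow_le_rpow (lintegral_mono_set hsub) (le_of_lt (inv_pos.mpr hrpos))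
  · -- second integral over Ioi x, restrict to Ioo x (2x)
    have hsub : Ioo x (2*x) ⊆ Ioi x := fun t ht => ht.1
    refine le_trans (main (Ioo x (2*x)) (2*x)⁻¹ x measurableSet_Ioo ?_ (by positivity)
      (le_of_lt hx0) ?_ (by field_simp)) ?_
    · rw [Real.volume_Ioo]; congr 1; ring
    · intro t ht
      apply ENNReal.ofReal_le_ofReal
      have ht0 : 0 < t := lt_trans hx0 ht.1
      have h1 : (2*x)⁻¹ ≤ t⁻¹ := by
        apply inv_anti₀ ht0 (le_of_lt ht.2)
      have h2 : (B * l x) ^ r ≤ l t ^ r :=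
        Real.rpow_le_rpow (by positivity) (key2 t ht) (le_of_lt hrpos)
      have := Real.rpow_nonneg (show (0:ℝ) ≤ B * l x by positivity) r
      have h2x : (0:ℝ) < (2*x)⁻¹ := by positivity
      nlinarith [inv_pos.mpr ht0]
    · exact ENNReal.rpow_le_rpow (lintegral_mono_set hsub) (le_of_lt (inv_pos.mpr hrpos))
end

section
/- (Necessity in Lemma TLH.) Let 1 ≤ r ≤ s ≤ ∞, a, b slowly varying on (0,∞), μ > 0, κ ∈ ℝ, and suppose there is C > 0 such that ‖ t^{−μ−1/s} b(t) ∫₀ᵗ u^{κ−1} g(u) du ‖_{L^s(0,∞)} ≤ C ‖ t^{−μ+κ−1/r} a(t) g(t) ‖_{L^r(0,∞)} for all measurable g ≥ 0. Then sup_{x>0} b(x)/a(x) < ∞. -/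
open MeasureTheory Set Real
open scoped ENNReal

/-- The (extended) Lebesgue `L^s` functional over the set `I` for `ℝ≥0∞`-valued functions,
with `s ∈ [1,∞]`. -/
noncomputable def elp (s : ℝ≥0∞) (I : Set ℝ) (F : ℝ → ℝ≥0∞) : ℝ≥0∞ :=
  if s = ⊤ then essSup F (MeasureTheory.volume.restrict I)
  else (∫⁻ t in I, F t ^ s.toReal) ^ s.toReal⁻¹


lemma svBound (a : ℝ → ℝ) (ha0 : ∀ t ∈ Set.Ioi (0:ℝ), 0 ≤ a t)
    (hsva : SlowlyVaryingOn a (Set.Ioi 0)) :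
    ∃ D : ℝ, 1 ≤ D ∧ ∀ x ∈ Set.Ioi (0:ℝ), ∀ t ∈ Set.Icc (x/2) (2*x), a t ≤ D * a x := by
  obtain ⟨g₁, g₂, hg₁, hg₂, c₁, c₂, hc₁, hc₂, h⟩ := hsva 1 one_pos
  refine ⟨max 1 (2*c₂/c₁), le_max_left _ _, ?_⟩
  intro x hx t ht
  have hx0 : (0:ℝ) < x := hx
  have ht0 : (0:ℝ) < t := lt_of_lt_of_le (by linarith) ht.1
  have htI : t ∈ Set.Ioi (0:ℝ) := ht0
  have hax : 0 ≤ a x := ha0 x hx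
  have key : c₁ * a t ≤ 2 * c₂ * a x := by
    rcases le_total t x with hle | hle
    · have h1 := (h t htI).2.1
      have h2 := hg₁ htI hx hle
      have h3 := (h x hx).1
      rw [Real.rpow_one] at h1 h3
      have h4 : c₁ * (t * a t) ≤ c₂ * (x * a x) := by
        calc c₁ * (t * a t) ≤ c₁ * (c₂ * g₁ t) := mul_le_mul_of_nonneg_left h1 hc₁.le
          _ ≤ c₁ * (c₂ * g₁ x) :=
            mul_le_mul_of_nonneg_left (mul_le_mul_of_nonneg_left h2 hc₂.le) hc₁.le
          _ = c₂ * (c₁ * g₁ x) := by ring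
          _ ≤ c₂ * (x * a x) := mul_le_mul_of_nonneg_left h3 hc₂.le
      have hx2t : x ≤ 2*t := by linarith [ht.1]
      have h5 : c₂ * (x * a x) ≤ c₂ * ((2*t) * a x) :=
        mul_le_mul_of_nonneg_left (mul_le_mul_of_nonneg_right hx2t hax) hc₂.le
      have h6 : t * (c₁ * a t) ≤ t * (2 * c₂ * a x) := by nlinarith [h4, h5]
      exact le_of_mul_le_mul_left h6 ht0
    · have h1 := (h t htI).2.2.2
      have h2 := hg₂ hx htI hle
      have h3 := (h x hx).2.2.1
      rw [Real.rpow_neg_one] at h1 h3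
      have h4 : c₁ * (t⁻¹ * a t) ≤ c₂ * (x⁻¹ * a x) := by
        calc c₁ * (t⁻¹ * a t) ≤ c₁ * (c₂ * g₂ t) := mul_le_mul_of_nonneg_left h1 hc₁.le
          _ ≤ c₁ * (c₂ * g₂ x) :=
            mul_le_mul_of_nonneg_left (mul_le_mul_of_nonneg_left h2 hc₂.le) hc₁.le
          _ = c₂ * (c₁ * g₂ x) := by ring
          _ ≤ c₂ * (x⁻¹ * a x) := mul_le_mul_of_nonneg_left h3 hc₂.le
      have h5 : x * (t * (c₁ * (t⁻¹ * a t))) ≤ x * (t * (c₂ * (x⁻¹ * a x))) :=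
        mul_le_mul_of_nonneg_left (mul_le_mul_of_nonneg_left h4 ht0.le) hx0.le
      have e1 : x * (t * (c₁ * (t⁻¹ * a t))) = x * (c₁ * a t) := by
        field_simp
      have e2 : x * (t * (c₂ * (x⁻¹ * a x))) = t * (c₂ * a x) := by
        field_simp
        try ring
      rw [e1, e2] at h5
      have h6 : t * (c₂ * a x) ≤ x * (2 * c₂ * a x) := by
        have := mul_le_mul_of_nonneg_right (show t ≤ 2*x by linarith [ht.2])
          (mul_nonneg hc₂.le hax)
        nlinarith [this]
      exact le_of_mul_le_mul_left (le_trans h5 h6) hx0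
  have : a t ≤ (2*c₂/c₁) * a x := by
    rw [div_mul_eq_mul_div, le_div_iff₀ hc₁]; linarith [key]
  calc a t ≤ (2*c₂/c₁) * a x := this
    _ ≤ max 1 (2*c₂/c₁) * a x := mul_le_mul_of_nonneg_right (le_max_right _ _) hax

lemma le_elp (s : ℝ≥0∞) (hs0 : s ≠ 0) (F : ℝ → ℝ≥0∞) (c : ℝ≥0∞) (x y : ℝ)
    (hx : 0 < x) (hxy : x < y) (hF : ∀ t ∈ Set.Ioo x y, c ≤ F t) :
    c * (ENNReal.ofReal (y - x)) ^ s.toReal⁻¹ ≤ elp s (Set.Ioi 0) F := by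
  have hsubI : Set.Ioo x y ⊆ Set.Ioi (0:ℝ) := fun t ht => lt_trans hx ht.1
  unfold elp
  split_ifs with hs
  · simp only [hs, ENNReal.toReal_top, inv_zero, ENNReal.rpow_zero, mul_one]
    by_contra hcon
    push_neg at hcon
    set ν := MeasureTheory.volume.restrict (Set.Ioi (0:ℝ)) with hν
    have h1 := ae_le_essSup (μ := ν) (f := F)
    rw [MeasureTheory.ae_iff] at h1
    have hsub : Set.Ioo x y ⊆ {t | ¬ F t ≤ essSup F ν} := fun t ht =>
      not_le.mpr (lt_of_lt_of_le hcon (hF t ht))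
    have h2 : ν (Set.Ioo x y) = 0 := measure_mono_null hsub h1
    have h3 : ν (Set.Ioo x y) = ENNReal.ofReal (y - x) := by
      rw [hν, Measure.restrict_apply measurableSet_Ioo,
        Set.inter_eq_left.mpr hsubI, Real.volume_Ioo]
    rw [h3] at h2
    rw [ENNReal.ofReal_eq_zero] at h2
    linarith
  · have hst : 0 < s.toReal := ENNReal.toReal_pos hs0 hs
    have step : c ^ s.toReal * ENNReal.ofReal (y - x) ≤ ∫⁻ t in Set.Ioi 0, F t ^ s.toReal := by
      have hpt : ∀ t, (Set.Ioo x y).indicator (fun _ => c ^ s.toReal) t ≤ F t ^ s.toReal := by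
        intro t; by_cases hmem : t ∈ Set.Ioo x y
        · rw [Set.indicator_of_mem hmem]; exact ENNReal.rpow_le_rpow (hF t hmem) hst.le
        · rw [Set.indicator_of_notMem hmem]; exact zero_le
      calc c ^ s.toReal * ENNReal.ofReal (y - x)
          = ∫⁻ t in Set.Ioi 0, (Set.Ioo x y).indicator (fun _ => c ^ s.toReal) t := by
            rw [lintegral_indicator measurableSet_Ioo, setLIntegral_const,
              Measure.restrict_apply measurableSet_Ioo,
              Set.inter_eq_left.mpr hsubI, Real.volume_Ioo]
        _ ≤ _ := lintegral_mono hpt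
    calc c * ENNReal.ofReal (y - x) ^ s.toReal⁻¹
        = (c ^ s.toReal * ENNReal.ofReal (y - x)) ^ s.toReal⁻¹ := by
          rw [ENNReal.mul_rpow_of_nonneg _ _ (inv_nonneg.mpr hst.le), ← ENNReal.rpow_mul,
            mul_inv_cancel₀ hst.ne', ENNReal.rpow_one]
      _ ≤ _ := ENNReal.rpow_le_rpow step (inv_nonneg.mpr hst.le)

lemma elp_le (r : ℝ≥0∞) (hr0 : r ≠ 0) (G : ℝ → ℝ≥0∞) (c : ℝ≥0∞) (x y : ℝ)
    (hx : 0 < x) (hxy : x < y)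
    (hG : ∀ t, G t ≤ (Set.Ioo x y).indicator (fun _ => c) t) :
    elp r (Set.Ioi 0) G ≤ c * (ENNReal.ofReal (y - x)) ^ r.toReal⁻¹ := by
  have hsubI : Set.Ioo x y ⊆ Set.Ioi (0:ℝ) := fun t ht => lt_trans hx ht.1
  unfold elp
  split_ifs with hs
  · simp only [hs, ENNReal.toReal_top, inv_zero, ENNReal.rpow_zero, mul_one]
    exact essSup_le_of_ae_le c (Filter.Eventually.of_forall fun t =>
      (hG t).trans (Set.indicator_le_self' (fun _ _ => zero_le) t))
  · have hrt : 0 < r.toReal := ENNReal.toReal_pos hr0 hs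
    have step : (∫⁻ t in Set.Ioi 0, G t ^ r.toReal) ≤ c ^ r.toReal * ENNReal.ofReal (y - x) := by
      have hpt : ∀ t, G t ^ r.toReal ≤ (Set.Ioo x y).indicator (fun _ => c ^ r.toReal) t := by
        intro t; by_cases hmem : t ∈ Set.Ioo x y
        · rw [Set.indicator_of_mem hmem]
          refine ENNReal.rpow_le_rpow ?_ hrt.le
          simpa [Set.indicator_of_mem hmem] using hG t
        · rw [Set.indicator_of_notMem hmem]
          have hz : G t = 0 := le_antisymm (by simpa [Set.indicator_of_notMem hmem] using hG t)
            zero_le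
          rw [hz, ENNReal.zero_rpow_of_pos hrt]
      calc (∫⁻ t in Set.Ioi 0, G t ^ r.toReal)
          ≤ ∫⁻ t in Set.Ioi 0, (Set.Ioo x y).indicator (fun _ => c ^ r.toReal) t :=
            lintegral_mono hpt
        _ = c ^ r.toReal * ENNReal.ofReal (y - x) := by
            rw [lintegral_indicator measurableSet_Ioo, setLIntegral_const,
              Measure.restrict_apply measurableSet_Ioo,
              Set.inter_eq_left.mpr hsubI, Real.volume_Ioo]
    calc (∫⁻ t in Set.Ioi 0, G t ^ r.toReal) ^ r.toReal⁻¹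
        ≤ (c ^ r.toReal * ENNReal.ofReal (y - x)) ^ r.toReal⁻¹ :=
          ENNReal.rpow_le_rpow step (inv_nonneg.mpr hrt.le)
      _ = c * ENNReal.ofReal (y - x) ^ r.toReal⁻¹ := by
          rw [ENNReal.mul_rpow_of_nonneg _ _ (inv_nonneg.mpr hrt.le), ← ENNReal.rpow_mul,
            mul_inv_cancel₀ hrt.ne', ENNReal.rpow_one]


theorem stmt9 (r s : ℝ≥0∞) (hr : 1 ≤ r) (hrs : r ≤ s)
    (a b : ℝ → ℝ) (ha0 : ∀ t ∈ Set.Ioi (0:ℝ), 0 ≤ a t) (hb0 : ∀ t ∈ Set.Ioi (0:ℝ), 0 ≤ b t)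
    (hsva : SlowlyVaryingOn a (Set.Ioi 0)) (hsvb : SlowlyVaryingOn b (Set.Ioi 0))
    (μ κ : ℝ) (hμ : 0 < μ) (C : ℝ) (hC : 0 < C)
    (hineq : ∀ g : ℝ → ℝ, Measurable g → (∀ u, 0 ≤ g u) →
      elp s (Set.Ioi 0) (fun t => ENNReal.ofReal (t ^ (-μ - s.toReal⁻¹) * b t) *
          ∫⁻ u in Set.Ioo 0 t, ENNReal.ofReal (u ^ (κ - 1) * g u)) ≤
        ENNReal.ofReal C *
          elp r (Set.Ioi 0) (fun t => ENNReal.ofReal (t ^ (-μ + κ - r.toReal⁻¹) * a t * g t))) :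
    ∃ K : ℝ, 0 < K ∧ ∀ x ∈ Set.Ioi (0:ℝ), b x ≤ K * a x := by
  have hr0 : r ≠ 0 := by
    intro h; rw [h] at hr; exact absurd hr (by simp)
  have hs0 : s ≠ 0 := fun h => hr0 (le_antisymm (h ▸ hrs) zero_le)
  obtain ⟨Da, hDa1, hDa⟩ := svBound a ha0 hsva
  obtain ⟨Db, hDb1, hDb⟩ := svBound b hb0 hsvb
  have hDa0 : (0:ℝ) < Da := lt_of_lt_of_le one_pos hDa1
  have hDb0 : (0:ℝ) < Db := lt_of_lt_of_le one_pos hDb1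
  set p : ℝ := s.toReal⁻¹ with hp
  set q : ℝ := r.toReal⁻¹ with hq
  have hp0 : 0 ≤ p := by positivity
  have hq0 : 0 ≤ q := by positivity
  set β : ℝ := -μ + 1 - q with hβ
  set cL : ℝ := (2:ℝ) ^ (-μ-p) / (2 * Db) with hcL
  set cR : ℝ := C * (2:ℝ) ^ |β| * Da / (2:ℝ) ^ q with hcR
  have hcLpos : 0 < cL := div_pos (Real.rpow_pos_of_pos two_pos _) (by linarith)
  have hcRpos : 0 < cR := by
    apply div_pos _ (Real.rpow_pos_of_pos two_pos _)
    have := Real.rpow_pos_of_pos (show (0:ℝ) < 2 by norm_num) |β|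
    positivity
  refine ⟨cR / cL, div_pos hcRpos hcLpos, ?_⟩
  intro x hx
  have hx0 : (0:ℝ) < x := hx
  have hbx : 0 ≤ b x := hb0 x hx
  have hax : 0 ≤ a x := ha0 x hx
  have hhalf : (0:ℝ) < x/2 := half_pos hx0
  set g : ℝ → ℝ := (Set.Ioo (x/2) x).indicator (fun u => u ^ (1-κ)) with hgdef
  have hgmeas : Measurable g :=
    (measurable_id.pow measurable_const).indicator measurableSet_Ioo
  have hgnn : ∀ u, 0 ≤ g u := by
    intro u; rw [hgdef]; by_cases hm : u ∈ Set.Ioo (x/2) x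
    · rw [Set.indicator_of_mem hm]
      exact Real.rpow_nonneg (le_of_lt (lt_trans hhalf hm.1)) _
    · rw [Set.indicator_of_notMem hm]
  have hInner : ∀ t : ℝ, x ≤ t →
      (∫⁻ u in Set.Ioo 0 t, ENNReal.ofReal (u ^ (κ - 1) * g u)) = ENNReal.ofReal (x/2) := by
    intro t hxt
    have hsub : Set.Ioo (x/2) x ⊆ Set.Ioo 0 t := fun u hu =>
      ⟨lt_trans hhalf hu.1, lt_of_lt_of_le hu.2 hxt⟩
    have heq : ∀ᵐ u ∂(volume : Measure ℝ), u ∈ Set.Ioo (0:ℝ) t →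
        ENNReal.ofReal (u ^ (κ-1) * g u) = (Set.Ioo (x/2) x).indicator (fun _ => (1:ℝ≥0∞)) u := by
      refine Filter.Eventually.of_forall fun u hu => ?_
      by_cases hm : u ∈ Set.Ioo (x/2) x
      · rw [Set.indicator_of_mem hm, hgdef, Set.indicator_of_mem hm, ← Real.rpow_add hu.1]
        rw [show κ - 1 + (1 - κ) = 0 by ring, Real.rpow_zero, ENNReal.ofReal_one]
      · rw [Set.indicator_of_notMem hm, hgdef, Set.indicator_of_notMem hm, mul_zero,
          ENNReal.ofReal_zero]
    rw [setLIntegral_congr_fun_ae measurableSet_Ioo heq,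
      lintegral_indicator measurableSet_Ioo, setLIntegral_const,
      Measure.restrict_apply measurableSet_Ioo, Set.inter_eq_left.mpr hsub, Real.volume_Ioo,
      one_mul, show x - x/2 = x/2 by ring]
  -- LHS lower bound
  set L0 : ℝ := (2*x) ^ (-μ-p) * (b x / Db) * (x/2) with hL0
  have hL0nn : 0 ≤ L0 := by
    apply mul_nonneg (mul_nonneg (Real.rpow_nonneg (by linarith) _) (div_nonneg hbx hDb0.le))
    linarith
  have hFlb : ∀ t ∈ Set.Ioo x (2*x), ENNReal.ofReal L0 ≤
      ENNReal.ofReal (t ^ (-μ - p) * b t) *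
        ∫⁻ u in Set.Ioo 0 t, ENNReal.ofReal (u ^ (κ - 1) * g u) := by
    intro t ht
    have ht0 : (0:ℝ) < t := lt_trans hx0 ht.1
    rw [hInner t ht.1.le, ← ENNReal.ofReal_mul
      (mul_nonneg (Real.rpow_nonneg ht0.le _) (hb0 t ht0))]
    apply ENNReal.ofReal_le_ofReal
    have h2x : (2*x) ^ (-μ-p) ≤ t ^ (-μ-p) :=
      Real.rpow_le_rpow_of_nonpos ht0 ht.2.le (by linarith)
    have hbt : b x / Db ≤ b t := by
      have hb1 : b x ≤ Db * b t := hDb t ht0 x ⟨by linarith [ht.2], by linarith [ht.1]⟩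
      rw [div_le_iff₀ hDb0]; linarith
    rw [hL0]
    apply mul_le_mul_of_nonneg_right _ (by linarith : (0:ℝ) ≤ x/2)
    exact mul_le_mul h2x hbt (div_nonneg hbx hDb0.le) (Real.rpow_nonneg ht0.le _)
  have hLlb : ENNReal.ofReal (L0 * x ^ p) ≤ elp s (Set.Ioi 0)
      (fun t => ENNReal.ofReal (t ^ (-μ - p) * b t) *
        ∫⁻ u in Set.Ioo 0 t, ENNReal.ofReal (u ^ (κ - 1) * g u)) := by
    have h := le_elp s hs0 _ (ENNReal.ofReal L0) x (2*x) hx0 (by linarith) hFlb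
    rw [show 2*x - x = x by ring] at h
    rw [ENNReal.ofReal_mul hL0nn, ← ENNReal.ofReal_rpow_of_pos hx0]
    exact h
  -- RHS upper bound
  set A0 : ℝ := (2:ℝ)^|β| * x^β * (Da * a x) with hA0
  have hA0nn : 0 ≤ A0 := by
    have h1 : (0:ℝ) ≤ (2:ℝ)^|β| := (Real.rpow_pos_of_pos two_pos _).le
    have h2 : (0:ℝ) ≤ x^β := (Real.rpow_pos_of_pos hx0 _).le
    positivity
  have hGub : ∀ t, ENNReal.ofReal (t ^ (-μ + κ - q) * a t * g t) ≤
      (Set.Ioo (x/2) x).indicator (fun _ => ENNReal.ofReal A0) t := by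
    intro t
    by_cases hm : t ∈ Set.Ioo (x/2) x
    · rw [Set.indicator_of_mem hm, hgdef, Set.indicator_of_mem hm]
      have ht0 : (0:ℝ) < t := lt_trans hhalf hm.1
      have e : t ^ (-μ + κ - q) * a t * t ^ (1-κ) = t ^ β * a t := by
        have h1 : t ^ (-μ+κ-q) * t ^ (1-κ) = t ^ β := by
          rw [← Real.rpow_add ht0]; congr 1; rw [hβ]; ring
        calc t ^ (-μ+κ-q) * a t * t ^ (1-κ) = t ^ (-μ+κ-q) * t ^ (1-κ) * a t := by ring
          _ = t ^ β * a t := by rw [h1]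
      rw [e]
      apply ENNReal.ofReal_le_ofReal
      have htβ : t ^ β ≤ (2:ℝ)^|β| * x^β := by
        rcases le_or_gt 0 β with hb | hb
        · have h1 : t ^ β ≤ x ^ β := Real.rpow_le_rpow ht0.le hm.2.le hb
          have h2 : (1:ℝ) ≤ (2:ℝ)^|β| := by
            rw [show (1:ℝ) = (2:ℝ)^(0:ℝ) by simp]
            exact Real.rpow_le_rpow_of_exponent_le one_le_two (abs_nonneg β)
          nlinarith [Real.rpow_nonneg hx0.le β]
        · have h1 : t ^ β ≤ (x/2) ^ β := Real.rpow_le_rpow_of_nonpos hhalf hm.1.le hb.le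
          have h2 : (x/2) ^ β = x ^ β / (2:ℝ) ^ β := Real.div_rpow hx0.le (by norm_num) β
          have h3 : (2:ℝ)^|β| = ((2:ℝ)^β)⁻¹ := by
            rw [abs_of_neg hb, Real.rpow_neg (by norm_num)]
          calc t ^ β ≤ (x/2) ^ β := h1
            _ = x ^ β / (2:ℝ) ^ β := h2
            _ = (2:ℝ)^|β| * x^β := by rw [h3, div_eq_mul_inv, mul_comm]
      have hat : a t ≤ Da * a x := hDa x hx t ⟨hm.1.le, by linarith [hm.2]⟩
      calc t ^ β * a t ≤ ((2:ℝ)^|β| * x^β) * (Da * a x) := by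
            apply mul_le_mul htβ hat (ha0 t ht0)
            have h1 : (0:ℝ) < (2:ℝ)^|β| := Real.rpow_pos_of_pos two_pos _
            have h2 : (0:ℝ) < x^β := Real.rpow_pos_of_pos hx0 _
            positivity
        _ = A0 := by rw [hA0]
    · rw [Set.indicator_of_notMem hm, hgdef, Set.indicator_of_notMem hm, mul_zero,
        ENNReal.ofReal_zero]
  have hRub : elp r (Set.Ioi 0) (fun t => ENNReal.ofReal (t ^ (-μ + κ - q) * a t * g t))
      ≤ ENNReal.ofReal (A0 * (x/2) ^ q) := by
    have h := elp_le r hr0 _ (ENNReal.ofReal A0) (x/2) x hhalf (by linarith) hGub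
    rw [show x - x/2 = x/2 by ring] at h
    rw [ENNReal.ofReal_mul hA0nn, ← ENNReal.ofReal_rpow_of_pos hhalf]
    exact h
  have hmain := hineq g hgmeas hgnn
  have hchain : ENNReal.ofReal (L0 * x ^ p) ≤ ENNReal.ofReal (C * (A0 * (x/2) ^ q)) :=
    calc ENNReal.ofReal (L0 * x ^ p) ≤ _ := hLlb
      _ ≤ ENNReal.ofReal C *
          elp r (Set.Ioi 0) (fun t => ENNReal.ofReal (t ^ (-μ + κ - q) * a t * g t)) := hmain
      _ ≤ ENNReal.ofReal C * ENNReal.ofReal (A0 * (x/2)^q) := mul_le_mul_right hRub _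
      _ = ENNReal.ofReal (C * (A0 * (x/2)^q)) := (ENNReal.ofReal_mul hC.le).symm
  have hRnn : 0 ≤ C * (A0 * (x/2)^q) :=
    mul_nonneg hC.le (mul_nonneg hA0nn (Real.rpow_nonneg (by linarith) q))
  have hfin : L0 * x ^ p ≤ C * (A0 * (x/2)^q) :=
    (ENNReal.ofReal_le_ofReal_iff hRnn).mp hchain
  have hxpow : x ^ (-μ-p) * x * x ^ p = x ^ (1-μ) := by
    rw [← Real.rpow_add_one hx0.ne', ← Real.rpow_add hx0]; congr 1; ring
  have e1 : L0 * x ^ p = b x * (cL * x ^ (1-μ)) := by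
    rw [hL0, hcL, Real.mul_rpow (by norm_num : (0:ℝ) ≤ 2) hx0.le]
    linear_combination ((2:ℝ) ^ (-μ-p) * b x / (2*Db)) * hxpow
  have hxq : x ^ β * x ^ q = x ^ (1-μ) := by
    rw [← Real.rpow_add hx0]; congr 1; rw [hβ]; ring
  have e2 : C * (A0 * (x/2) ^ q) = a x * (cR * x ^ (1-μ)) := by
    rw [hA0, hcR, Real.div_rpow hx0.le (by norm_num : (0:ℝ) ≤ 2)]
    linear_combination (C * (2:ℝ)^|β| * Da * a x / (2:ℝ)^q) * hxq
  rw [e1, e2] at hfin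
  have e3 : a x * (cR * x ^ (1-μ)) = (cR / cL * a x) * (cL * x ^ (1-μ)) := by
    field_simp
    try ring
  rw [e3] at hfin
  have hX : (0:ℝ) < x ^ (1-μ) := Real.rpow_pos_of_pos hx0 _
  exact le_of_mul_le_mul_right hfin (by positivity)
end
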